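/- arXiv:2108.03910 — 3 statements merged into one kernel-verified Lean document; each statement's English description precedes it below -/
import Mathlib

section
/- Let G be a C_6-saturated graph and let u, v be non-adjacent vertices of G. Suppose C is a 6-cycle in G + uv containing the edge uv, and P_1 is a subpath of C of length p with endpoints x and y that contains the edge uv. If G contains a path P_2 of length p from x to y with V(P_1) ∩ V(P_2) = {x, y}, then G contains a path P of length 6 - p from x to y such that P shares an internal vertex with P_2 (i.e., (V(P) ∩ V(P_2)) \ {x,y} is nonempty). -/
open SimpleGraph

/-- The graph obtained from `G` by adding the edge `uv`. -/
def addEdge {V : Type*} (G : SimpleGraph V) (u v : V) : SimpleGraph V :=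
  G ⊔ SimpleGraph.fromEdgeSet {s(u, v)}

/-- `G` contains a cycle of length `k`. -/
def HasCycleLen {V : Type*} (G : SimpleGraph V) (k : ℕ) : Prop :=
  ∃ (v : V) (c : G.Walk v v), c.IsCycle ∧ c.length = k

/-- `G` is `C_k`-saturated. -/
def IsCSaturated {V : Type*} (k : ℕ) (G : SimpleGraph V) : Prop :=
  ¬ HasCycleLen G k ∧ ∀ u v : V, u ≠ v → ¬ G.Adj u v → HasCycleLen (addEdge G u v) k

/-- degree of a vertex. -/
noncomputable def degOf {V : Type*} (G : SimpleGraph V) (v : V) : ℕ :=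
  (G.neighborSet v).ncard

/-- `v` lies in a triangle of `G`. -/
def InTriangle {V : Type*} (G : SimpleGraph V) (v : V) : Prop :=
  ∃ a b, G.Adj v a ∧ G.Adj v b ∧ G.Adj a b

/-- `T₂(G)`: degree-2 vertices in a triangle having a degree-2 neighbour. -/
def T2set {V : Type*} (G : SimpleGraph V) : Set V :=
  {v | degOf G v = 2 ∧ InTriangle G v ∧ ∃ w, G.Adj v w ∧ degOf G w = 2}

lemma path_length_one_of_edge {V : Type*} {G : SimpleGraph V} {x y : V}
    (p : G.Walk x y) (hp : p.IsPath) (he : s(x, y) ∈ p.edges) : p.length = 1 := by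
  cases p with
  | nil => simp at he
  | @cons _ z _ h q =>
    rw [Walk.edges_cons, List.mem_cons] at he
    rw [Walk.cons_isPath_iff] at hp
    rcases he with he | he
    · have hyz : y = z := Sym2.congr_right.mp he
      subst hyz
      have : q = Walk.nil := Walk.isPath_iff_eq_nil.mp hp.1
      subst this; simp
    · exact absurd (q.fst_mem_support_of_mem_edges he) hp.2

/-- Lemma 3.1 of the paper. -/
theorem lemma_3_1 {V : Type*} (G : SimpleGraph V) (hG : IsCSaturated 6 G)
    (u v x y : V) (hne : u ≠ v) (hna : ¬ G.Adj u v) (p : ℕ)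
    (P1 : (addEdge G u v).Walk x y) (hP1 : P1.IsPath) (hP1len : P1.length = p)
    (huv : s(u, v) ∈ P1.edges)
    (hC : ∃ Q : (addEdge G u v).Walk y x, (P1.append Q).IsCycle ∧ P1.length + Q.length = 6)
    (P2 : G.Walk x y) (hP2 : P2.IsPath) (hP2len : P2.length = p)
    (hint : ∀ w, w ∈ P1.support → w ∈ P2.support → w = x ∨ w = y) :
    ∃ P : G.Walk x y, P.IsPath ∧ P.length = 6 - p ∧
      ∃ w, w ∈ P.support ∧ w ∈ P2.support ∧ w ≠ x ∧ w ≠ y := by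
  obtain ⟨Q, hcyc, hlen6⟩ := hC
  have hP1pos : 0 < P1.length := by
    cases P1 with
    | nil => simp at huv
    | cons h q => simp [Walk.length_cons]
  have hxy : x ≠ y := by
    rintro rfl
    have := Walk.isPath_iff_eq_nil.mp hP1
    subst this; simp at hP1pos
  -- edges of the cycle are nodup
  have hed : (P1.edges ++ Q.edges).Nodup := by
    have := hcyc.isTrail.edges_nodup
    rwa [Walk.edges_append] at this
  have hdisjE : P1.edges.Disjoint Q.edges := by
    intro a ha hb; exact ((List.nodup_append).mp hed).2.2 a ha a hb rfl
  have huvQ : s(u, v) ∉ Q.edges := fun h => hdisjE huv h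
  -- Q's edges lie in G
  have hQG : ∀ e ∈ Q.edges, e ∈ G.edgeSet := by
    intro e he
    have := Q.edges_subset_edgeSet he
    simp only [addEdge, edgeSet_sup, edgeSet_fromEdgeSet, Set.mem_union, Set.mem_diff,
      Set.mem_singleton_iff] at this
    rcases this with h | ⟨h, _⟩
    · exact h
    · exact absurd (h ▸ he) huvQ
  -- support facts
  have hsupnd : (P1.support.tail ++ Q.support.tail).Nodup := by
    have := hcyc.2
    rwa [Walk.support_append, List.tail_append_of_ne_nil (Walk.support_ne_nil _),
      P1.support_eq_cons, List.tail_cons] at this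
  have hQtnd : Q.support.tail.Nodup := ((List.nodup_append).mp hsupnd).2.1
  have hyQt : y ∉ Q.support.tail := by
    have hyP1t : y ∈ P1.support.tail := by
      have := P1.end_mem_support
      rw [P1.support_eq_cons, List.mem_cons] at this
      rcases this with h | h
      · exact absurd h.symm hxy
      · exact h
    exact fun h => ((List.nodup_append).mp hsupnd).2.2 y hyP1t y h rfl
  have hQnd : Q.support.Nodup := by
    rw [Q.support_eq_cons, List.nodup_cons]
    exact ⟨hyQt, hQtnd⟩
  have hQpath : Q.IsPath := Walk.IsPath.mk' hQnd
  set Q' : G.Walk y x := Q.transfer G hQG with hQ'def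
  have hQ'path : Q'.IsPath := hQpath.transfer hQG
  have hQlen : Q.length = 6 - p := by omega
  refine ⟨Q'.reverse, hQ'path.reverse, by simp [hQ'def, hQlen], ?_⟩
  by_contra hw
  push_neg at hw
  -- every common vertex of Q and P2 is x or y
  have hshared : ∀ w, w ∈ Q.support → w ∈ P2.support → w = x ∨ w = y := by
    intro w h1 h2
    have h1' : w ∈ Q'.reverse.support := by
      rw [Walk.support_reverse, List.mem_reverse, hQ'def, Walk.support_transfer]; exact h1
    by_cases hx : w = x
    · exact Or.inl hx
    · exact Or.inr (hw w h1' h2 hx)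
  -- build a 6-cycle in G
  set W : G.Walk x x := P2.append Q' with hWdef
  have hWlen : W.length = 6 := by
    rw [hWdef, Walk.length_append, hQ'def, Walk.length_transfer]
    omega
  have hWtrail : W.IsTrail := by
    constructor
    rw [hWdef, Walk.edges_append, List.nodup_append]
    refine ⟨hP2.isTrail.edges_nodup,
      by rw [hQ'def, Walk.edges_transfer]; exact hQpath.isTrail.edges_nodup, ?_⟩
    intro e h1 e' h2 hee'
    subst hee'
    rw [hQ'def, Walk.edges_transfer] at h2
    induction e using Sym2.ind with
    | _ a b =>
      have hab : a ≠ b := (P2.adj_of_mem_edges h1).ne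
      have ha := hshared a (Q.fst_mem_support_of_mem_edges h2) (P2.fst_mem_support_of_mem_edges h1)
      have hb := hshared b (Q.snd_mem_support_of_mem_edges h2) (P2.snd_mem_support_of_mem_edges h1)
      have hexy : s(a, b) = s(x, y) := by
        rcases ha with rfl | rfl <;> rcases hb with rfl | rfl
        · exact absurd rfl hab
        · rfl
        · exact Sym2.eq_swap
        · exact absurd rfl hab
      have hp1 : P2.length = 1 := path_length_one_of_edge P2 hP2 (hexy ▸ h1)
      have hq1 : Q.length = 1 := path_length_one_of_edge Q hQpath
        (by rw [Sym2.eq_swap]; exact hexy ▸ h2)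
      omega
  have hWnil : W ≠ Walk.nil := by
    intro h
    rw [h] at hWlen
    simp at hWlen
  have hWsup : W.support.tail.Nodup := by
    rw [hWdef, Walk.support_append, List.tail_append_of_ne_nil (Walk.support_ne_nil _),
      P2.support_eq_cons, List.tail_cons, List.nodup_append]
    have hP2nd := hP2.support_nodup
    refine ⟨(List.tail_sublist _).nodup hP2nd, by rw [hQ'def, Walk.support_transfer]; exact hQtnd, ?_⟩
    intro w h1 w' h2 hww'
    subst hww'
    rw [hQ'def, Walk.support_transfer] at h2
    have hwP2 : w ∈ P2.support := by rw [P2.support_eq_cons]; exact List.mem_cons_of_mem _ h1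
    rcases hshared w (List.mem_of_mem_tail h2) hwP2 with rfl | rfl
    · rw [P2.support_eq_cons, List.nodup_cons] at hP2nd
      exact hP2nd.1 h1
    · exact hyQt h2
  exact hG.1 ⟨x, W, ⟨⟨hWtrail, hWnil⟩, hWsup⟩, hWlen⟩
end

section
/- Let G be a C_6-saturated graph with minimum degree 2, and let X be the set of vertices v of G such that either d(v) ≥ 3, or d(v) = 2 and v lies in a triangle but has no neighbor of degree 2. Then the sum of degrees over X is at least 3|X|. -/
open SimpleGraph

lemma mk_C6 {V : Type*} (G : SimpleGraph V) (a b c d e f : V)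
    (hab : G.Adj a b) (hbc : G.Adj b c) (hcd : G.Adj c d) (hde : G.Adj d e)
    (hef : G.Adj e f) (hfa : G.Adj f a)
    (hnd : [a,b,c,d,e,f].Nodup) : HasCycleLen G 6 := by
  refine ⟨a, .cons hab (.cons hbc (.cons hcd (.cons hde (.cons hef (.cons hfa .nil))))), ?_, rfl⟩
  simp only [List.nodup_cons, List.mem_cons, List.not_mem_nil, or_false, List.mem_singleton,
    List.nodup_nil, and_true, not_or] at hnd
  obtain ⟨⟨hab', hac, had, hae, haf⟩, ⟨hbc', hbd, hbe, hbf⟩, ⟨hcd', hce, hcf⟩, ⟨hde', hdf⟩, hef'⟩ := hnd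
  constructor
  · constructor
    · constructor
      simp only [Walk.edges_cons, Walk.edges_nil, List.nodup_cons, List.mem_cons,
        List.not_mem_nil, or_false, List.nodup_nil, and_true, not_or, Sym2.eq, Sym2.rel_iff',
        Prod.mk.injEq, Prod.swap_prod_mk]
      refine ⟨⟨?_,?_,?_,?_,?_⟩,⟨?_,?_,?_,?_⟩,⟨?_,?_,?_⟩,⟨?_,?_⟩,?_⟩ <;> push_neg <;>
        try tauto
    · simp
  · simp only [Walk.support_cons, Walk.support_nil, List.tail_cons, List.nodup_cons,
      List.mem_cons, List.not_mem_nil, or_false, List.mem_singleton, List.nodup_nil, and_true,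
      not_or]
    tauto

lemma addEdge_adj {V : Type*} {G : SimpleGraph V} {u v : V} (hne : u ≠ v) (x y : V) :
    (addEdge G u v).Adj x y ↔ G.Adj x y ∨ ((x = u ∧ y = v) ∨ (x = v ∧ y = u)) := by
  simp only [addEdge, sup_adj, fromEdgeSet_adj, Set.mem_singleton_iff, Sym2.eq_iff]
  constructor
  · rintro (h | ⟨(⟨rfl, rfl⟩ | ⟨rfl, rfl⟩), h2⟩) <;> tauto
  · rintro (h | ⟨rfl, rfl⟩ | ⟨rfl, rfl⟩) <;> simp_all [hne.symm]

def H6 {V : Type*} (G : SimpleGraph V) (u v : V) (a b c d e f : V) : Prop :=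
  [a,b,c,d,e,f].Nodup ∧ (addEdge G u v).Adj a b ∧ (addEdge G u v).Adj b c ∧
    (addEdge G u v).Adj c d ∧ (addEdge G u v).Adj d e ∧ (addEdge G u v).Adj e f ∧
    (addEdge G u v).Adj f a

def Concl {V : Type*} (G : SimpleGraph V) (u v : V) : Prop :=
  (∃ p1 p2 p3 p4 : V, G.Adj u p1 ∧ G.Adj p1 p2 ∧ G.Adj p2 p3 ∧ G.Adj p3 p4 ∧ G.Adj p4 v ∧
    [u,p1,p2,p3,p4,v].Nodup) ∨ HasCycleLen G 6

lemma H6.rot {V : Type*} {G : SimpleGraph V} {u v a b c d e f : V}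
    (h : H6 G u v a b c d e f) : H6 G u v b c d e f a := by
  obtain ⟨hnd, h1, h2, h3, h4, h5, h6⟩ := h
  refine ⟨?_, h2, h3, h4, h5, h6, h1⟩
  have : [b,c,d,e,f,a].Perm [a,b,c,d,e,f] := by
    simpa using List.perm_append_comm (l₁ := [b,c,d,e,f]) (l₂ := [a])
  exact this.nodup_iff.mpr hnd

lemma H6.rev {V : Type*} {G : SimpleGraph V} {u v a b c d e f : V}
    (h : H6 G u v a b c d e f) : H6 G u v b a f e d c := by
  obtain ⟨hnd, h1, h2, h3, h4, h5, h6⟩ := h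
  refine ⟨?_, h1.symm, h6.symm, h5.symm, h4.symm, h3.symm, h2.symm⟩
  simp only [List.nodup_cons, List.mem_cons, List.not_mem_nil, or_false, List.nodup_nil,
    and_true, not_or, List.mem_singleton] at hnd ⊢
  obtain ⟨⟨hab, hac, had, hae, haf⟩, ⟨hbc, hbd, hbe, hbf⟩, ⟨hcd, hce, hcf⟩, ⟨hde, hdf⟩,
    hef, -⟩ := hnd
  exact ⟨⟨fun h => hab h.symm, hbf, hbe, hbd, hbc⟩,
    ⟨haf, hae, had, hac⟩, ⟨fun h => hef h.symm, fun h => hdf h.symm, fun h => hcf h.symm⟩,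
    ⟨fun h => hde h.symm, fun h => hce h.symm⟩, fun h => hcd h.symm, not_false⟩

lemma H6.key {V : Type*} {G : SimpleGraph V} {u v : V} (hne : u ≠ v) {c d e f : V}
    (h : H6 G u v u v c d e f) : Concl G u v := by
  obtain ⟨hnd, h1, h2, h3, h4, h5, h6⟩ := h
  simp only [List.nodup_cons, List.mem_cons, List.not_mem_nil, or_false, List.nodup_nil,
    and_true, not_or, List.mem_singleton] at hnd
  obtain ⟨⟨huv, huc, hud, hue, huf⟩, ⟨hvc, hvd, hve, hvf⟩, ⟨hcd, hce, hcf⟩, ⟨hde, hdf⟩,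
    hef, -⟩ := hnd
  simp only [addEdge_adj hne] at h2 h3 h4 h5 h6
  have h2' : G.Adj v c := by rcases h2 with h | ⟨rfl, rfl⟩ | ⟨h, rfl⟩ <;> tauto
  have h3' : G.Adj c d := by rcases h3 with h | ⟨rfl, rfl⟩ | ⟨rfl, rfl⟩ <;> tauto
  have h4' : G.Adj d e := by rcases h4 with h | ⟨rfl, rfl⟩ | ⟨rfl, rfl⟩ <;> tauto
  have h5' : G.Adj e f := by rcases h5 with h | ⟨rfl, rfl⟩ | ⟨rfl, rfl⟩ <;> tauto
  have h6' : G.Adj f u := by rcases h6 with h | ⟨rfl, h⟩ | ⟨rfl, h⟩ <;> tauto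
  refine Or.inl ⟨f, e, d, c, h6'.symm, h5'.symm, h4'.symm, h3'.symm, h2'.symm, ?_⟩
  simp only [List.nodup_cons, List.mem_cons, List.not_mem_nil, or_false, List.nodup_nil,
    and_true, not_or, List.mem_singleton]
  exact ⟨⟨huf, hue, hud, huc, huv⟩,
    ⟨fun h => hef h.symm, fun h => hdf h.symm, fun h => hcf h.symm, fun h => hvf h.symm⟩,
    ⟨fun h => hde h.symm, fun h => hce h.symm, fun h => hve h.symm⟩,
    ⟨fun h => hcd h.symm, fun h => hvd h.symm⟩, fun h => hvc h.symm, not_false⟩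

lemma H6.concl {V : Type*} {G : SimpleGraph V} {u v : V} (hne : u ≠ v) {a b c d e f : V}
    (h : H6 G u v a b c d e f) : Concl G u v := by
  by_cases k1 : (a = u ∧ b = v) ∨ (a = v ∧ b = u)
  · rcases k1 with ⟨rfl, rfl⟩ | ⟨rfl, rfl⟩
    exacts [h.key hne, h.rev.key hne]
  by_cases k2 : (b = u ∧ c = v) ∨ (b = v ∧ c = u)
  · rcases k2 with ⟨rfl, rfl⟩ | ⟨rfl, rfl⟩
    exacts [h.rot.key hne, h.rot.rev.key hne]
  by_cases k3 : (c = u ∧ d = v) ∨ (c = v ∧ d = u)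
  · rcases k3 with ⟨rfl, rfl⟩ | ⟨rfl, rfl⟩
    exacts [h.rot.rot.key hne, h.rot.rot.rev.key hne]
  by_cases k4 : (d = u ∧ e = v) ∨ (d = v ∧ e = u)
  · rcases k4 with ⟨rfl, rfl⟩ | ⟨rfl, rfl⟩
    exacts [h.rot.rot.rot.key hne, h.rot.rot.rot.rev.key hne]
  by_cases k5 : (e = u ∧ f = v) ∨ (e = v ∧ f = u)
  · rcases k5 with ⟨rfl, rfl⟩ | ⟨rfl, rfl⟩
    exacts [h.rot.rot.rot.rot.key hne, h.rot.rot.rot.rot.rev.key hne]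
  by_cases k6 : (f = u ∧ a = v) ∨ (f = v ∧ a = u)
  · rcases k6 with ⟨rfl, rfl⟩ | ⟨rfl, rfl⟩
    exacts [h.rot.rot.rot.rot.rot.key hne, h.rot.rot.rot.rot.rot.rev.key hne]
  obtain ⟨hnd, h1, h2, h3, h4, h5, h6⟩ := h
  simp only [addEdge_adj hne] at h1 h2 h3 h4 h5 h6
  exact Or.inr (mk_C6 G a b c d e f (h1.resolve_right k1) (h2.resolve_right k2)
    (h3.resolve_right k3) (h4.resolve_right k4) (h5.resolve_right k5) (h6.resolve_right k6) hnd)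

lemma exists_path5 {V : Type*} {G : SimpleGraph V} {u v : V} (hne : u ≠ v)
    (hnoC6 : ¬ HasCycleLen G 6) (h : HasCycleLen (addEdge G u v) 6) :
    ∃ p1 p2 p3 p4 : V, G.Adj u p1 ∧ G.Adj p1 p2 ∧ G.Adj p2 p3 ∧ G.Adj p3 p4 ∧ G.Adj p4 v ∧
      [u,p1,p2,p3,p4,v].Nodup := by
  obtain ⟨w, cyc, hc, hlen⟩ := h
  cases cyc with
  | nil => simp at hlen
  | cons h1 q =>
  cases q with
  | nil => simp at hlen
  | cons h2 q =>
  cases q with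
  | nil => simp at hlen
  | cons h3 q =>
  cases q with
  | nil => simp at hlen
  | cons h4 q =>
  cases q with
  | nil => simp at hlen
  | cons h5 q =>
  cases q with
  | nil => simp at hlen
  | cons h6 q =>
  cases q with
  | cons h7 q => simp at hlen
  | nil =>
    have hnd := hc.support_nodup
    simp only [Walk.support_cons, Walk.support_nil, List.tail_cons] at hnd
    rename_i a1 a2 a3 a4 a5
    have hnd' : [w, a1, a2, a3, a4, a5].Nodup := by
      have hp : [w,a1,a2,a3,a4,a5].Perm [a1,a2,a3,a4,a5,w] := by
        simpa using List.perm_append_comm (l₁ := [w]) (l₂ := [a1,a2,a3,a4,a5])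
      exact hp.nodup_iff.mpr hnd
    have hH : H6 G u v w a1 a2 a3 a4 a5 := ⟨hnd', h1, h2, h3, h4, h5, h6⟩
    rcases hH.concl hne with hp | hcyc
    · exact hp
    · exact absurd hcyc hnoC6

section
variable {V : Type*} [Fintype V] {G : SimpleGraph V} {v a b c d : V}

lemma nbrs_two (h2 : degOf G v = 2) (ha : G.Adj v a) (hb : G.Adj v b) (hab : a ≠ b) :
    ∀ x, G.Adj v x ↔ x = a ∨ x = b := by
  have hsub : ({a, b} : Set V) ⊆ G.neighborSet v := by rintro x (rfl | rfl) <;> simpa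
  have hle : (G.neighborSet v).ncard ≤ ({a, b} : Set V).ncard := by
    rw [Set.ncard_pair hab]; exact le_of_eq h2
  have heq := Set.eq_of_subset_of_ncard_le hsub hle (Set.toFinite _)
  intro x
  have : x ∈ G.neighborSet v ↔ x ∈ ({a, b} : Set V) := by rw [← heq]
  simpa using this

lemma nbrs_three (h3 : degOf G v = 3) (ha : G.Adj v a) (hb : G.Adj v b) (hc : G.Adj v c)
    (hab : a ≠ b) (hac : a ≠ c) (hbc : b ≠ c) :
    ∀ x, G.Adj v x ↔ x = a ∨ x = b ∨ x = c := by
  have hsub : ({a, b, c} : Set V) ⊆ G.neighborSet v := by rintro x (rfl | rfl | rfl) <;> simpa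
  have hle : (G.neighborSet v).ncard ≤ ({a, b, c} : Set V).ncard := by
    rw [Set.ncard_insert_of_notMem (by simp [hab, hac]) (Set.toFinite _), Set.ncard_pair hbc]
    exact le_of_eq h3
  have heq := Set.eq_of_subset_of_ncard_le hsub hle (Set.toFinite _)
  intro x
  have : x ∈ G.neighborSet v ↔ x ∈ ({a, b, c} : Set V) := by rw [← heq]
  simpa using this

lemma nbrs_four (h4 : degOf G v = 4) (ha : G.Adj v a) (hb : G.Adj v b) (hc : G.Adj v c)
    (hd : G.Adj v d) (hab : a ≠ b) (hac : a ≠ c) (had : a ≠ d) (hbc : b ≠ c) (hbd : b ≠ d)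
    (hcd : c ≠ d) :
    ∀ x, G.Adj v x ↔ x = a ∨ x = b ∨ x = c ∨ x = d := by
  have hsub : ({a, b, c, d} : Set V) ⊆ G.neighborSet v := by
    rintro x (rfl | rfl | rfl | rfl) <;> simpa
  have hle : (G.neighborSet v).ncard ≤ ({a, b, c, d} : Set V).ncard := by
    rw [Set.ncard_insert_of_notMem (by simp [hab, hac, had]) (Set.toFinite _),
      Set.ncard_insert_of_notMem (by simp [hbc, hbd]) (Set.toFinite _), Set.ncard_pair hcd]
    exact le_of_eq h4
  have heq := Set.eq_of_subset_of_ncard_le hsub hle (Set.toFinite _)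
  intro x
  have : x ∈ G.neighborSet v ↔ x ∈ ({a, b, c, d} : Set V) := by rw [← heq]
  simpa using this

lemma third_nbr (h3 : degOf G v = 3) (ha : G.Adj v a) (hb : G.Adj v b) (hab : a ≠ b) :
    ∃ x, G.Adj v x ∧ x ≠ a ∧ x ≠ b := by
  by_contra hcon
  push_neg at hcon
  have hsub : G.neighborSet v ⊆ ({a, b} : Set V) := by
    intro x hx
    rcases eq_or_ne x a with rfl | h2
    · simp
    · simp [hcon x hx h2]
  have h := Set.ncard_le_ncard hsub (Set.toFinite _)
  rw [Set.ncard_pair hab] at h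
  have : degOf G v ≤ 2 := h
  omega
end

section
variable {V : Type*} [Fintype V] {G : SimpleGraph V}

lemma degA_aux (hG : IsCSaturated 6 G) {v a b : V}
    (ha : G.Adj v a) (hb : G.Adj v b) (hab : G.Adj a b)
    (hN : ∀ x, G.Adj v x ↔ x = a ∨ x = b) (h3a : degOf G a = 3) : False := by
  have hvb : v ≠ b := hb.ne
  obtain ⟨x, hax, hxv, hxb⟩ := third_nbr h3a ha.symm hab hvb
  have hNa := nbrs_three h3a ha.symm hab hax hvb hxv.symm hxb.symm
  have hvx_ne : v ≠ x := hxv.symm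
  have hvx_nadj : ¬ G.Adj v x := by
    intro h
    rcases (hN x).1 h with rfl | rfl
    · exact hax.ne rfl
    · exact hxb rfl
  obtain ⟨p1, p2, p3, p4, h01, h12, h23, h34, h45, hnd⟩ :=
    exists_path5 hvx_ne hG.1 (hG.2 v x hvx_ne hvx_nadj)
  simp only [List.nodup_cons, List.mem_cons, List.not_mem_nil, or_false, List.nodup_nil,
    and_true, not_or, List.mem_singleton] at hnd
  obtain ⟨⟨hv1, hv2, hv3, hv4, hvx⟩, ⟨h12', h13, h14, h1x⟩, ⟨h23', h24, h2x⟩, ⟨h34', h3x⟩,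
    h4x, -⟩ := hnd
  rcases (hN p1).1 h01 with rfl | rfl
  · -- p1 = a
    rcases (hNa p2).1 h12 with rfl | rfl | rfl
    · exact hv2 rfl
    · -- p2 = b
      refine hG.1 (mk_C6 G v p1 x p4 p3 p2 ha hax h45.symm h34.symm h23.symm hb.symm ?_)
      simp only [List.nodup_cons, List.mem_cons, List.not_mem_nil, or_false, List.nodup_nil,
        and_true, not_or, List.mem_singleton]
      exact ⟨⟨hv1, hvx, hv4, hv3, hv2⟩, ⟨h1x, h14, h13, h12'⟩,
        ⟨fun h => h4x h.symm, fun h => h3x h.symm, fun h => h2x h.symm⟩,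
        ⟨fun h => h34' h.symm, fun h => h24 h.symm⟩, fun h => h23' h.symm, not_false⟩
    · exact h2x rfl
  · -- p1 = b
    rcases eq_or_ne p2 a with rfl | hp2a
    · rcases (hNa p3).1 h23 with rfl | rfl | rfl
      · exact hv3 rfl
      · exact h13 rfl
      · exact h3x rfl
    · have hp3a : p3 ≠ a := by
        rintro rfl
        rcases (hNa p2).1 h23.symm with rfl | rfl | rfl
        · exact hv2 rfl
        · exact h12' rfl
        · exact h2x rfl
      have hp4a : p4 ≠ a := by
        rintro rfl
        rcases (hNa p3).1 h34.symm with rfl | rfl | rfl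
        · exact hv3 rfl
        · exact h13 rfl
        · exact h3x rfl
      refine hG.1 (mk_C6 G x p4 p3 p2 p1 a h45.symm h34.symm h23.symm h12.symm hab.symm hax ?_)
      simp only [List.nodup_cons, List.mem_cons, List.not_mem_nil, or_false, List.nodup_nil,
        and_true, not_or, List.mem_singleton]
      exact ⟨⟨fun h => h4x h.symm, fun h => h3x h.symm, fun h => h2x h.symm,
          fun h => h1x h.symm, fun h => hax.ne' h⟩,
        ⟨fun h => h34' h.symm, fun h => h24 h.symm, fun h => h14 h.symm, hp4a⟩,
        ⟨fun h => h23' h.symm, fun h => h13 h.symm, hp3a⟩,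
        ⟨fun h => h12' h.symm, hp2a⟩, fun h => hab.ne' h, not_false⟩

lemma degA (hG : IsCSaturated 6 G) (hmin : ∀ v, 2 ≤ degOf G v)
    {v a : V} (hv2 : degOf G v = 2) (htri : InTriangle G v)
    (hnb : ∀ w, G.Adj v w → degOf G w ≠ 2) (hva : G.Adj v a) : 4 ≤ degOf G a := by
  obtain ⟨a', b', h1, h2, h3⟩ := htri
  have hN := nbrs_two hv2 h1 h2 h3.ne
  have hd2 := hnb a hva
  have hge := hmin a
  rcases Nat.lt_or_ge (degOf G a) 4 with hlt | h
  · have h3a : degOf G a = 3 := by omega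
    rcases (hN a).1 hva with rfl | rfl
    · exact absurd (degA_aux hG h1 h2 h3 hN h3a) id
    · exact absurd (degA_aux hG h2 h1 h3.symm (fun x => (hN x).trans or_comm) h3a) id
  · exact h
end

section
variable {V : Type*} [Fintype V] {G : SimpleGraph V}

def T1c (G : SimpleGraph V) (v : V) : Prop :=
  degOf G v = 2 ∧ InTriangle G v ∧ ∀ w, G.Adj v w → degOf G w ≠ 2

lemma partner {v a : V} (hT : T1c G v) (hva : G.Adj v a) :
    ∃ b, G.Adj v b ∧ G.Adj a b ∧ (∀ x, G.Adj v x ↔ x = a ∨ x = b) := by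
  obtain ⟨h2, ⟨a', b', h1', h2', h3'⟩, -⟩ := hT
  have hN := nbrs_two h2 h1' h2' h3'.ne
  rcases (hN a).1 hva with h | h
  · exact ⟨b', h2', h ▸ h3', fun x => (h ▸ hN x : _)⟩
  · exact ⟨a', h1', h ▸ h3'.symm, fun x => ((h ▸ hN x : _)).trans or_comm⟩

lemma degB (hG : IsCSaturated 6 G) (hmin : ∀ v, 2 ≤ degOf G v)
    {a v1 v2 v3 : V} (h12 : v1 ≠ v2) (h13 : v1 ≠ v3) (h23 : v2 ≠ v3)
    (hT1 : T1c G v1) (hT2 : T1c G v2) (hT3 : T1c G v3)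
    (ha1 : G.Adj a v1) (ha2 : G.Adj a v2) (ha3 : G.Adj a v3) : 5 ≤ degOf G a := by
  have h4 : 4 ≤ degOf G a := degA hG hmin hT1.1 hT1.2.1 hT1.2.2 ha1.symm
  by_contra h5
  have h4eq : degOf G a = 4 := by omega
  obtain ⟨b1, hv1b, hab1, hN1⟩ := partner hT1 ha1.symm
  have hb14 : 4 ≤ degOf G b1 := degA hG hmin hT1.1 hT1.2.1 hT1.2.2 hv1b
  have hb1v1 : v1 ≠ b1 := hv1b.ne
  have hb1v2 : v2 ≠ b1 := fun h => by have h2 := hT2.1; rw [h] at h2; omega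
  have hb1v3 : v3 ≠ b1 := fun h => by have h2 := hT3.1; rw [h] at h2; omega
  have hNa := nbrs_four h4eq ha1 ha2 ha3 hab1 h12 h13 hb1v1 h23 hb1v2 hb1v3
  obtain ⟨b2, hv2b, hab2, hN2'⟩ := partner hT2 ha2.symm
  have hb24 : 4 ≤ degOf G b2 := degA hG hmin hT2.1 hT2.2.1 hT2.2.2 hv2b
  have hb2 : b2 = b1 := by
    rcases (hNa b2).1 hab2 with h | h | h | h
    · rw [h, hT1.1] at hb24; omega
    · rw [h, hT2.1] at hb24; omega
    · rw [h, hT3.1] at hb24; omega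
    · exact h
  rw [hb2] at hN2'
  have hN2 := hN2'
  obtain ⟨b3, hv3b, hab3, hN3'⟩ := partner hT3 ha3.symm
  have hb34 : 4 ≤ degOf G b3 := degA hG hmin hT3.1 hT3.2.1 hT3.2.2 hv3b
  have hb3 : b3 = b1 := by
    rcases (hNa b3).1 hab3 with h | h | h | h
    · rw [h, hT1.1] at hb34; omega
    · rw [h, hT2.1] at hb34; omega
    · rw [h, hT3.1] at hb34; omega
    · exact h
  rw [hb3] at hN3'
  have hN3 := hN3'
  have hnadj : ¬ G.Adj v1 v2 := by
    intro h
    rcases (hN1 v2).1 h with h' | h'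
    · exact ha2.ne' h'
    · exact hb1v2 h'
  obtain ⟨p1, p2, p3, p4, hq1, hq2, hq3, hq4, hq5, hnd⟩ :=
    exists_path5 h12 hG.1 (hG.2 v1 v2 h12 hnadj)
  simp only [List.nodup_cons, List.mem_cons, List.not_mem_nil, or_false, List.nodup_nil,
    and_true, not_or, List.mem_singleton] at hnd
  obtain ⟨⟨hw1, hw2, hw3, hw4, hw5⟩, ⟨hx2, hx3, hx4, hx5⟩, ⟨hy3, hy4, hy5⟩, ⟨hz4, hz5⟩,
    hu5, -⟩ := hnd
  have hp4' : G.Adj v2 p4 := hq5.symm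
  rcases (hN1 p1).1 hq1 with hp1 | hp1 <;> rcases (hN2 p4).1 hp4' with hp4 | hp4
  · exact hx4 (hp1.trans hp4.symm)
  · -- p1 = a, p4 = b1
    rcases (hNa p2).1 (hp1 ▸ hq2) with hp2 | hp2 | hp2 | hp2
    · exact hw2 hp2.symm
    · exact hy5 hp2
    · -- p2 = v3
      rcases (hN3 p3).1 (hp2 ▸ hq3) with hp3 | hp3
      · exact hx3 (hp1.trans hp3.symm)
      · exact hz4 (hp3.trans hp4.symm)
    · exact hy4 (hp2.trans hp4.symm)
  · -- p1 = b1, p4 = a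
    have : G.Adj a p3 := (hp4 ▸ hq4 : G.Adj p3 a).symm
    rcases (hNa p3).1 this with hp3 | hp3 | hp3 | hp3
    · exact hw3 hp3.symm
    · exact hz5 hp3
    · -- p3 = v3
      rcases (hN3 p2).1 (hp3 ▸ hq3 : G.Adj p2 v3).symm with hp2 | hp2
      · exact hy4 (hp2.trans hp4.symm)
      · exact hx2 (hp1.trans hp2.symm)
    · exact hx3 (hp1.trans hp3.symm)
  · exact hx4 (hp1.trans hp4.symm)
end

open scoped Classical in
lemma deg_card {V : Type*} [Fintype V] (G : SimpleGraph V) (x : V) :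
    degOf G x = (Finset.univ.filter (fun y => G.Adj x y)).card := by
  rw [degOf, Set.ncard_eq_toFinset_card']
  congr 1
  ext y
  simp [neighborSet]
  exact Set.mem_toFinset
open Finset in
open scoped Classical in
/-- Lemma 3.3 of the paper: the degree sum over X is at least 3|X|. -/
theorem lemma_3_3 {V : Type*} [Fintype V] (G : SimpleGraph V)
    (hG : IsCSaturated 6 G) (hmin : ∀ v, 2 ≤ degOf G v) (hex : ∃ v, degOf G v = 2) :
    3 * (Finset.univ.filter (fun v : V =>
        3 ≤ degOf G v ∨
          (degOf G v = 2 ∧ InTriangle G v ∧ ∀ w, G.Adj v w → degOf G w ≠ 2))).card ≤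
      ∑ v ∈ Finset.univ.filter (fun v : V =>
        3 ≤ degOf G v ∨
          (degOf G v = 2 ∧ InTriangle G v ∧ ∀ w, G.Adj v w → degOf G w ≠ 2)), degOf G v := by
  set X3 : Finset V := univ.filter (fun v => 3 ≤ degOf G v) with hX3
  set T1f : Finset V := univ.filter (fun v => T1c G v) with hT1f
  have hsplit : (univ.filter (fun v : V =>
      3 ≤ degOf G v ∨
        (degOf G v = 2 ∧ InTriangle G v ∧ ∀ w, G.Adj v w → degOf G w ≠ 2))) = X3 ∪ T1f := by
    ext x
    simp only [hX3, hT1f, mem_filter, mem_union, mem_univ, true_and]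
    simp only [T1c]
  have hdisj : Disjoint X3 T1f := by
    rw [Finset.disjoint_left]
    intro x hx hx'
    simp only [hX3, hT1f, mem_filter, mem_univ, true_and] at hx hx'
    simp only [T1c] at hx'
    omega
  rw [hsplit, Finset.sum_union hdisj, Finset.card_union_of_disjoint hdisj]
  have hT1sum : ∑ v ∈ T1f, degOf G v = 2 * T1f.card := by
    rw [Finset.sum_congr rfl (fun x hx => (Finset.mem_filter.1 hx).2.1), Finset.sum_const,
      smul_eq_mul, mul_comm]
  rw [hT1sum]
  -- t a := number of T1 neighbours of a
  set t : V → ℕ := fun a => (T1f.filter (fun x => G.Adj a x)).card with ht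
  have hdouble : ∑ a ∈ univ, t a = 2 * T1f.card := by
    have : ∀ a, t a = ∑ x ∈ T1f, if G.Adj a x then 1 else 0 := fun a =>
      Finset.card_filter _ _
    rw [Finset.sum_congr rfl (fun a _ => this a), Finset.sum_comm]
    have : ∀ x ∈ T1f, (∑ a ∈ univ, if G.Adj a x then 1 else 0) = degOf G x := by
      intro x hx
      rw [deg_card]
      rw [Finset.card_filter]
      exact Finset.sum_congr rfl (fun a _ => by simp [adj_comm])
    rw [Finset.sum_congr rfl this, Finset.sum_congr rfl
      (fun x hx => (Finset.mem_filter.1 hx).2.1), Finset.sum_const, smul_eq_mul, mul_comm]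
  have hzero : ∀ a ∈ univ \ X3, t a = 0 := by
    intro a ha
    simp only [hX3, Finset.mem_sdiff, mem_filter, mem_univ, true_and] at ha
    have ha2 : degOf G a = 2 := by have := hmin a; omega
    rw [ht]
    simp only [Finset.card_eq_zero, Finset.filter_eq_empty_iff]
    intro x hx hadj
    exact absurd ha2 ((Finset.mem_filter.1 hx).2.2.2 a hadj.symm)
  have hrestrict : ∑ a ∈ X3, t a = 2 * T1f.card := by
    rw [← hdouble, ← Finset.sum_subset (Finset.subset_univ X3)]
    intro x hx hx'
    exact hzero x (Finset.mem_sdiff.2 ⟨hx, hx'⟩)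
  -- pointwise bound
  have hpoint : ∀ a ∈ X3, t a ≤ 2 * (degOf G a - 3) := by
    intro a ha
    have ha3 : 3 ≤ degOf G a := (Finset.mem_filter.1 ha).2
    rcases Nat.eq_zero_or_pos (t a) with h0 | hpos
    · omega
    · obtain ⟨v, hv⟩ := Finset.card_pos.1 hpos
      have hv' := Finset.mem_filter.1 hv
      have hvT : T1c G v := (Finset.mem_filter.1 hv'.1).2
      have hav : G.Adj a v := hv'.2
      have h4 : 4 ≤ degOf G a := degA hG hmin hvT.1 hvT.2.1 hvT.2.2 hav.symm
      rcases Nat.lt_or_ge (t a) 3 with hlt | hge3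
      · omega
      rcases Nat.lt_or_ge (t a) 4 with hlt4 | hge4
      · -- t a = 3
        have h3' : t a = 3 := by omega
        have h3 : (T1f.filter (fun x => G.Adj a x)).card = 3 := h3' 
        obtain ⟨x, y, z, hxy, hxz, hyz, hset⟩ := Finset.card_eq_three.1 h3
        have hx : x ∈ T1f.filter (fun x => G.Adj a x) := by rw [hset]; simp
        have hy : y ∈ T1f.filter (fun x => G.Adj a x) := by rw [hset]; simp
        have hz : z ∈ T1f.filter (fun x => G.Adj a x) := by rw [hset]; simp
        have hx' := Finset.mem_filter.1 hx
        have hy' := Finset.mem_filter.1 hy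
        have hz' := Finset.mem_filter.1 hz
        have h5 : 5 ≤ degOf G a := degB hG hmin hxy hxz hyz
          (Finset.mem_filter.1 hx'.1).2 (Finset.mem_filter.1 hy'.1).2
          (Finset.mem_filter.1 hz'.1).2 hx'.2 hy'.2 hz'.2
        omega
      · -- t a ≥ 4 : t a + 1 ≤ degOf G a
        obtain ⟨b, hvb, hab, -⟩ := partner hvT hav.symm
        have hb4 : 4 ≤ degOf G b := degA hG hmin hvT.1 hvT.2.1 hvT.2.2 hvb
        have hbnot : b ∉ T1f.filter (fun x => G.Adj a x) := by
          intro hb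
          have := (Finset.mem_filter.1 (Finset.mem_filter.1 hb).1).2.1
          omega
        have hsub : insert b (T1f.filter (fun x => G.Adj a x)) ⊆
            univ.filter (fun y => G.Adj a y) := by
          intro x hx
          rcases Finset.mem_insert.1 hx with rfl | hx'
          · simp [hab]
          · simp [(Finset.mem_filter.1 hx').2]
        have hcard := Finset.card_le_card hsub
        rw [Finset.card_insert_of_notMem hbnot, ← deg_card] at hcard
        have hfin : t a + 1 ≤ degOf G a := hcard
        omega
  have hsum_ge : ∑ a ∈ X3, t a ≤ ∑ a ∈ X3, 2 * (degOf G a - 3) :=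
    Finset.sum_le_sum hpoint
  have hdecomp : ∑ a ∈ X3, degOf G a = (∑ a ∈ X3, (degOf G a - 3)) + 3 * X3.card := by
    have h : ∀ a ∈ X3, degOf G a = (degOf G a - 3) + 3 := by
      intro a ha
      have := (Finset.mem_filter.1 ha).2
      omega
    rw [Finset.sum_congr rfl h, Finset.sum_add_distrib, Finset.sum_const, smul_eq_mul,
      mul_comm]
  rw [hrestrict] at hsum_ge
  rw [← Finset.mul_sum] at hsum_ge
  have hkey : T1f.card ≤ ∑ a ∈ X3, (degOf G a - 3) := Nat.le_of_mul_le_mul_left hsum_ge (by omega)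
  omega
end

section
/- Let G be a C_6-saturated graph with minimum degree 2 and suppose there exists a vertex α of degree 2 lying in a triangle, with N(α) = {α₁, α₂}, N(α₁) = {α, α₂, x₁}, N(α₂) = {α, α₁, x₂}, where x₁ ≠ x₂. Then G contains no path of length 5 from α to x₁ whose second vertex is α₂. -/
open SimpleGraph

/-- No 5-path from a to x1 starts through a2 (part of Lemma 3.3's argument). -/
theorem no_five_path_through_alpha2 {V : Type*} (G : SimpleGraph V)
    (hG : IsCSaturated 6 G) (hmin : ∀ v, 2 ≤ degOf G v)
    (a a1 a2 x1 x2 : V) (hda : degOf G a = 2) (htri : InTriangle G a)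
    (hNa : G.neighborSet a = {a1, a2})
    (hNa1 : G.neighborSet a1 = {a, a2, x1})
    (hNa2 : G.neighborSet a2 = {a, a1, x2})
    (hx : x1 ≠ x2) :
    ¬ ∃ P : G.Walk a x1, P.IsPath ∧ P.length = 5 ∧
        P.support.tail.head? = some a2 := by
  rintro ⟨P, hP, hlen, hhead⟩
  have hN2 : ∀ w, G.Adj a2 w → w = a ∨ w = a1 ∨ w = x2 := by
    intro w hw
    have : w ∈ G.neighborSet a2 := hw
    rw [hNa2] at this; simpa using this
  have hN1 : ∀ w, G.Adj a1 w → w = a ∨ w = a2 ∨ w = x1 := by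
    intro w hw
    have : w ∈ G.neighborSet a1 := hw
    rw [hNa1] at this; simpa using this
  have ha1x1 : G.Adj a1 x1 := by
    have : x1 ∈ G.neighborSet a1 := by rw [hNa1]; simp
    exact this
  have ha1a2 : G.Adj a1 a2 := by
    have : a2 ∈ G.neighborSet a1 := by rw [hNa1]; simp
    exact this
  cases P with
  | nil => simp at hlen
  | cons h1 P =>
  rename_i b
  cases P with
  | nil => simp at hlen
  | cons h2 P =>
  rename_i c
  cases P with
  | nil => simp at hlen
  | cons h3 P =>
  rename_i d
  cases P with
  | nil => simp at hlen
  | cons h4 P =>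
  rename_i e
  cases P with
  | nil => simp at hlen
  | cons h5 P =>
  rename_i f
  cases P with
  | cons h6 P => simp at hlen
  | nil =>
  -- b = a2
  have hb : b = a2 := by simpa using hhead
  subst hb
  simp only [Walk.isPath_def, Walk.support_cons, Walk.support_nil] at hP
  -- hP : [a, a2, c, d, e, x1].Nodup
  simp only [List.nodup_cons, List.mem_cons, List.mem_singleton, List.not_mem_nil,
    List.nodup_nil, or_false, and_true, not_or] at hP
  push_neg at hP
  obtain ⟨⟨haa2, hac, had, hae, hax1⟩, ⟨ha2c, ha2d, ha2e, ha2x1⟩, ⟨hcd, hce, hcx1⟩, ⟨hde, hdx1⟩, hex1, -⟩ := hP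
  rcases hN2 c h2 with rfl | hc | hc
  · exact hac rfl
  · -- c = a1 : then d must be x1, contradicting nodup
    subst hc
    rcases hN1 d h3 with rfl | rfl | rfl
    · exact had rfl
    · exact ha2d rfl
    · exact hdx1 rfl
  · -- c = x2 : build a 6-cycle b-c-d-e-x1-a1-b  (b is a2, c is x2)
    subst hc
    have ha1c : a1 ≠ c := by
      rintro rfl
      rcases hN1 d h3 with rfl | rfl | rfl
      · exact had rfl
      · exact ha2d rfl
      · exact hdx1 rfl
    have ha1d : a1 ≠ d := by
      rintro rfl
      rcases hN1 e h4 with rfl | rfl | rfl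
      · exact hae rfl
      · exact ha2e rfl
      · exact hex1 rfl
    have ha1e : a1 ≠ e := by
      rintro rfl
      rcases hN1 d h4.symm with rfl | rfl | rfl
      · exact had rfl
      · exact ha2d rfl
      · exact hdx1 rfl
    refine hG.1 ⟨b, .cons h2 (.cons h3 (.cons h4 (.cons h5 (.cons ha1x1.symm
      (.cons ha1a2 .nil))))), ?_, rfl⟩
    rw [Walk.cons_isCycle_iff]
    constructor
    · simp only [Walk.isPath_def, Walk.support_cons, Walk.support_nil, List.nodup_cons,
        List.mem_cons, List.not_mem_nil, List.nodup_nil, or_false, and_true, not_or]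
      push_neg
      exact ⟨⟨hcd, hce, hcx1, fun h => ha1c h.symm, fun h => ha2c h.symm⟩,
        ⟨hde, hdx1, fun h => ha1d h.symm, fun h => ha2d h.symm⟩,
        ⟨hex1, fun h => ha1e h.symm, fun h => ha2e h.symm⟩,
        ⟨ha1x1.ne', fun h => ha2x1 h.symm⟩, ⟨ha1a2.ne, trivial⟩⟩
    · simp [Sym2.eq_iff, ha2c, ha2d, ha2e, ha2x1, hcd, hce, hcx1, hde, hdx1, hex1,
        ha1c, ha1d, ha1e, ha1x1.ne', ha1a2.ne, ha1a2.ne',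
        Ne.symm ha2c, Ne.symm ha2d, Ne.symm ha2e, Ne.symm ha2x1, Ne.symm hcd,
        Ne.symm hce, Ne.symm hcx1, Ne.symm hde, Ne.symm hdx1, Ne.symm hex1,
        Ne.symm ha1c, Ne.symm ha1d, Ne.symm ha1e]
end
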